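/- Multi-qubit Pauli twirl with leakage (Lemma 1): fix n ≥ 1. For u : {1,…,n} → {0,1,2,3} and c : {1,…,n} → {1, i, −1, −i}, let U_{u,c} be the 3^n × 3^n matrix with entries (U_{u,c})_{x,y} = ∏_{k=1}^n (M_{u(k),c(k)})_{x_k, y_k} (the n-fold Kronecker product of the matrices M_{u(k),c(k)}). Then for every 3^n × 3^n complex matrix ρ: (1/16^n) ∑_{u} ∑_{c} U_{u,c} ρ U_{u,c}† = P̄(ρ) = ∑_{b ∈ {c,l}^n} tr(Π_b ρ) Π̃_b. -/

import Mathlib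

open Matrix

noncomputable section

/-- The four 2×2 Pauli matrices σ₀ = I, σ₁ = X, σ₂ = Y, σ₃ = Z. -/
def pauli : Fin 4 → Matrix (Fin 2) (Fin 2) ℂ :=
  ![1, !![0, 1; 1, 0], !![0, -Complex.I; Complex.I, 0], !![1, 0; 0, -1]]

/-- The four phases 1, i, −1, −i. -/
def phase (c : Fin 4) : ℂ := Complex.I ^ (c : ℕ)

/-- The 3×3 matrix M_{u,c} whose upper-left 2×2 block is `phase c • pauli u`, whose
(3,3) entry is 1, and whose remaining entries vanish. -/
def pauliLeak (u c : Fin 4) : Matrix (Fin 3) (Fin 3) ℂ :=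
  Matrix.of fun x y =>
    if hx : (x : ℕ) < 2 then
      if hy : (y : ℕ) < 2 then phase c * pauli u ⟨x, hx⟩ ⟨y, hy⟩ else 0
    else
      if (y : ℕ) < 2 then 0 else 1

/-- The n-fold Kronecker product U_{u,c} of the matrices M_{u(k), c(k)}. -/
def pauliLeakKron {n : ℕ} (u c : Fin n → Fin 4) :
    Matrix (Fin n → Fin 3) (Fin n → Fin 3) ℂ :=
  Matrix.of fun x y => ∏ k, pauliLeak (u k) (c k) (x k) (y k)

/-- The projector Π_b associated with a leakage pattern `b : Fin n → Bool`
(`b j = true` meaning that qubit `j` is leaked, i.e. its index equals 2). -/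
def leakProj {n : ℕ} (b : Fin n → Bool) :
    Matrix (Fin n → Fin 3) (Fin n → Fin 3) ℂ :=
  Matrix.diagonal fun k => if ∀ j, (k j = (2 : Fin 3) ↔ b j = true) then 1 else 0

/-- The rank of Π_b, namely 2^{#{j : b j = c}}. -/
def leakProjRank {n : ℕ} (b : Fin n → Bool) : ℕ :=
  2 ^ (Finset.univ.filter fun j => b j = false).card

/-- The twirling projector P̄(ρ) = ∑_b tr(Π_b ρ) Π̃_b. -/
def twirlProj {n : ℕ} (ρ : Matrix (Fin n → Fin 3) (Fin n → Fin 3) ℂ) :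
    Matrix (Fin n → Fin 3) (Fin n → Fin 3) ℂ :=
  ∑ b : Fin n → Bool,
    Matrix.trace (leakProj b * ρ) • ((leakProjRank b : ℂ)⁻¹ • leakProj b)

def g (x a : Fin 3) : ℂ := if x = 2 then (if a = 2 then 1 else 0) else (if a = 2 then 0 else 2⁻¹)

lemma aux1 : ((1:Fin 4):ℕ) = 1 := rfl
lemma aux2 : ((2:Fin 4):ℕ) = 2 := rfl
lemma aux3 : ((3:Fin 4):ℕ) = 3 := rfl

lemma pauliSum (x a y b : Fin 2) :
    ∑ u : Fin 4, pauli u x a * (starRingEnd ℂ) (pauli u y b)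
    = if x = y ∧ a = b then 2 else 0 := by
  fin_cases x <;> fin_cases a <;> fin_cases y <;> fin_cases b <;>
    norm_num [Fin.sum_univ_four, pauli, Complex.ext_iff, Matrix.cons_val_two, Matrix.cons_val_three]

lemma phaseSum : ∑ c : Fin 4, phase c = 0 := by
  norm_num [Fin.sum_univ_four, phase, aux1, aux2, aux3, pow_succ, Complex.ext_iff]

lemma phaseSumConj : ∑ c : Fin 4, (starRingEnd ℂ) (phase c) = 0 := by
  rw [← map_sum, phaseSum, map_zero]

lemma phase_mul_conj (c : Fin 4) : phase c * (starRingEnd ℂ) (phase c) = 1 := by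
  fin_cases c <;> norm_num [phase, pow_succ, Complex.ext_iff]

lemma fin3_eq_two {x : Fin 3} (h : ¬(x:ℕ) < 2) : x = 2 := by
  have := x.isLt; exact Fin.ext (by simp; omega)

lemma fin3_ne_two {x : Fin 3} (h : (x:ℕ) < 2) : x ≠ 2 := by
  rintro rfl; simp at h

lemma pauliLeak_ll {u c : Fin 4} {x a : Fin 3} (hx : (x:ℕ)<2) (ha : (a:ℕ)<2) :
    pauliLeak u c x a = phase c * pauli u ⟨x,hx⟩ ⟨a,ha⟩ := by simp only [pauliLeak, Matrix.of_apply, dif_pos hx, dif_pos ha]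
lemma pauliLeak_lt {u c : Fin 4} {x a : Fin 3} (hx : (x:ℕ)<2) (ha : ¬(a:ℕ)<2) :
    pauliLeak u c x a = 0 := by simp only [pauliLeak, Matrix.of_apply, dif_pos hx, dif_neg ha]
lemma pauliLeak_tl {u c : Fin 4} {x a : Fin 3} (hx : ¬(x:ℕ)<2) (ha : (a:ℕ)<2) :
    pauliLeak u c x a = 0 := by simp only [pauliLeak, Matrix.of_apply, dif_neg hx, if_pos ha]
lemma pauliLeak_tt {u c : Fin 4} {x a : Fin 3} (hx : ¬(x:ℕ)<2) (ha : ¬(a:ℕ)<2) :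
    pauliLeak u c x a = 1 := by simp only [pauliLeak, Matrix.of_apply, dif_neg hx, if_neg ha]

lemma rhs_zero {x a y b : Fin 3} (h : g x a = 0 ∨ ¬(x = y ∧ a = b)) :
    (if x = y ∧ a = b then 16 * g x a else 0) = 0 := by
  rcases h with h | h
  · split_ifs <;> simp [h]
  · rw [if_neg h]

lemma site (x a y b : Fin 3) :
    ∑ u : Fin 4, ∑ c : Fin 4, pauliLeak u c x a * (starRingEnd ℂ) (pauliLeak u c y b)
    = if x = y ∧ a = b then 16 * g x a else 0 := by
  by_cases hx : (x:ℕ) < 2 <;> by_cases ha : (a:ℕ) < 2 <;>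
    by_cases hy : (y:ℕ) < 2 <;> by_cases hb : (b:ℕ) < 2
  · -- TTTT
    simp only [pauliLeak_ll hx ha, pauliLeak_ll hy hb, _root_.map_mul]
    have h1 : ∀ u c : Fin 4,
        phase c * pauli u ⟨x,hx⟩ ⟨a,ha⟩ *
          ((starRingEnd ℂ) (phase c) * (starRingEnd ℂ) (pauli u ⟨y,hy⟩ ⟨b,hb⟩))
        = (phase c * (starRingEnd ℂ) (phase c)) *
            (pauli u ⟨x,hx⟩ ⟨a,ha⟩ * (starRingEnd ℂ) (pauli u ⟨y,hy⟩ ⟨b,hb⟩)) := by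
      intros; ring
    simp_rw [h1, phase_mul_conj, one_mul, Finset.sum_const, Finset.card_univ,
      Fintype.card_fin, nsmul_eq_mul, ← Finset.mul_sum, pauliSum]
    simp only [g, if_neg (fin3_ne_two hx), if_neg (fin3_ne_two ha), Fin.mk.injEq,
      ← Fin.ext_iff]
    split_ifs <;> norm_num
  · -- TTTF
    simp only [pauliLeak_lt hy hb, map_zero, mul_zero, Finset.sum_const_zero]
    exact (rhs_zero (Or.inr (by rintro ⟨rfl, rfl⟩; exact hb ha))).symm
  · -- TTFT
    simp only [pauliLeak_tl hy hb, map_zero, mul_zero, Finset.sum_const_zero]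
    exact (rhs_zero (Or.inr (by rintro ⟨rfl, rfl⟩; exact hy hx))).symm
  · -- TTFF
    simp only [pauliLeak_ll hx ha, pauliLeak_tt hy hb, _root_.map_one, mul_one]
    simp_rw [← Finset.sum_mul, phaseSum, zero_mul, Finset.sum_const_zero]
    exact (rhs_zero (Or.inr (by rintro ⟨rfl, rfl⟩; exact hy hx))).symm
  · -- TFTT
    simp only [pauliLeak_lt hx ha, zero_mul, Finset.sum_const_zero]
    exact (rhs_zero (Or.inr (by rintro ⟨rfl, rfl⟩; exact ha hb))).symm
  · -- TFTF
    simp only [pauliLeak_lt hx ha, zero_mul, Finset.sum_const_zero]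
    exact (rhs_zero (Or.inl (by simp [g, if_neg (fin3_ne_two hx), fin3_eq_two ha]))).symm
  · -- TFFT
    simp only [pauliLeak_lt hx ha, zero_mul, Finset.sum_const_zero]
    exact (rhs_zero (Or.inr (by rintro ⟨rfl, rfl⟩; exact hy hx))).symm
  · -- TFFF
    simp only [pauliLeak_lt hx ha, zero_mul, Finset.sum_const_zero]
    exact (rhs_zero (Or.inr (by rintro ⟨rfl, rfl⟩; exact hy hx))).symm
  · -- FTTT
    simp only [pauliLeak_tl hx ha, zero_mul, Finset.sum_const_zero]
    exact (rhs_zero (Or.inr (by rintro ⟨rfl, rfl⟩; exact hx hy))).symm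
  · -- FTTF
    simp only [pauliLeak_tl hx ha, zero_mul, Finset.sum_const_zero]
    exact (rhs_zero (Or.inr (by rintro ⟨rfl, rfl⟩; exact hx hy))).symm
  · -- FTFT
    simp only [pauliLeak_tl hx ha, zero_mul, Finset.sum_const_zero]
    exact (rhs_zero (Or.inl (by simp [g, fin3_eq_two hx, fin3_ne_two ha]))).symm
  · -- FTFF
    simp only [pauliLeak_tl hx ha, zero_mul, Finset.sum_const_zero]
    exact (rhs_zero (Or.inl (by simp [g, fin3_eq_two hx, fin3_ne_two ha]))).symm
  · -- FFTT
    simp only [pauliLeak_tt hx ha, pauliLeak_ll hy hb, one_mul, _root_.map_mul]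
    simp_rw [← Finset.sum_mul, phaseSumConj, zero_mul, Finset.sum_const_zero]
    exact (rhs_zero (Or.inr (by rintro ⟨rfl, rfl⟩; exact hx hy))).symm
  · -- FFTF
    simp only [pauliLeak_lt hy hb, map_zero, mul_zero, Finset.sum_const_zero]
    exact (rhs_zero (Or.inr (by rintro ⟨rfl, rfl⟩; exact hx hy))).symm
  · -- FFFT
    simp only [pauliLeak_tl hy hb, map_zero, mul_zero, Finset.sum_const_zero]
    exact (rhs_zero (Or.inr (by rintro ⟨rfl, rfl⟩; exact ha hb))).symm
  · -- FFFF
    simp only [pauliLeak_tt hx ha, pauliLeak_tt hy hb, _root_.map_one, mul_one,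
      Finset.sum_const, Finset.card_univ, Fintype.card_fin, nsmul_eq_mul]
    rw [if_pos ⟨(fin3_eq_two hx).trans (fin3_eq_two hy).symm,
        (fin3_eq_two ha).trans (fin3_eq_two hb).symm⟩]
    simp [g, fin3_eq_two hx, fin3_eq_two ha]
    norm_num


lemma sum_fun_prod {n : ℕ} (h : Fin n → Fin 4 → Fin 4 → ℂ) :
    ∑ u : Fin n → Fin 4, ∑ c : Fin n → Fin 4, ∏ k, h k (u k) (c k)
    = ∏ k, ∑ u : Fin 4, ∑ c : Fin 4, h k u c := by
  calc ∑ u : Fin n → Fin 4, ∑ c : Fin n → Fin 4, ∏ k, h k (u k) (c k)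
      = ∑ p : (Fin n → Fin 4) × (Fin n → Fin 4), ∏ k, h k (p.1 k) (p.2 k) := by
        rw [Fintype.sum_prod_type]
    _ = ∑ f : Fin n → Fin 4 × Fin 4, ∏ k, h k (f k).1 (f k).2 := by
        rw [← (Equiv.arrowProdEquivProdArrow (Fin n) (fun _ => Fin 4) (fun _ => Fin 4)).sum_comp]
        apply Fintype.sum_congr
        intro f
        simp [Equiv.arrowProdEquivProdArrow]
    _ = ∏ k, ∑ p : Fin 4 × Fin 4, h k p.1 p.2 :=
        (Fintype.prod_sum (fun k (p : Fin 4 × Fin 4) => h k p.1 p.2)).symm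
    _ = ∏ k, ∑ u : Fin 4, ∑ c : Fin 4, h k u c := by
        simp_rw [Fintype.sum_prod_type]

lemma prod_g {n : ℕ} (x a : Fin n → Fin 3) :
    ∏ k, g (x k) (a k)
    = if (∀ j, a j = (2:Fin 3) ↔ x j = 2) then
        ((2:ℂ) ^ (Finset.univ.filter fun j => ¬ x j = (2:Fin 3)).card)⁻¹ else 0 := by
  split_ifs with h
  · have : ∀ k, g (x k) (a k) = if x k = 2 then (1:ℂ) else 2⁻¹ := by
      intro k
      by_cases hk : x k = 2
      · simp [g, hk, (h k).mpr hk]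
      · have h2 : ¬ a k = 2 := fun h2 => hk ((h k).mp h2)
        simp [g, hk, h2]
    rw [Finset.prod_congr rfl fun k _ => this k, Finset.prod_ite, Finset.prod_const,
      Finset.prod_const, one_pow, one_mul, ← inv_pow]
  · push_neg at h
    obtain ⟨j, hj⟩ := h
    apply Finset.prod_eq_zero (Finset.mem_univ j)
    by_cases h1 : x j = 2
    · have h2 : ¬ a j = 2 := by tauto
      simp [g, h1, h2]
    · have h2 : a j = 2 := by tauto
      simp [g, h1, h2]

lemma rhs_eq {n : ℕ} (ρ : Matrix (Fin n → Fin 3) (Fin n → Fin 3) ℂ) (x y : Fin n → Fin 3) :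
    twirlProj ρ x y = if x = y then ∑ a, ρ a a * ∏ k, g (x k) (a k) else 0 := by
  classical
  by_cases hxy : x = y
  · subst hxy
    rw [if_pos rfl]
    simp only [twirlProj, Matrix.sum_apply, Matrix.smul_apply, smul_eq_mul, leakProj,
      Matrix.diagonal_apply_eq]
    have htr : ∀ b : Fin n → Bool,
        Matrix.trace (Matrix.diagonal
          (fun k => if ∀ j, (k j = (2:Fin 3) ↔ b j = true) then (1:ℂ) else 0) * ρ)
        = ∑ a, (if ∀ j, (a j = (2:Fin 3) ↔ b j = true) then (1:ℂ) else 0) * ρ a a := by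
      intro b; simp [Matrix.trace, Matrix.diagonal_mul, Matrix.diag]
    simp_rw [htr]
    set b₀ : Fin n → Bool := fun j => decide (x j = 2) with hb₀
    have hbiff : ∀ b : Fin n → Bool, (∀ j, (x j = (2:Fin 3) ↔ b j = true)) ↔ b = b₀ := by
      intro b
      rw [funext_iff]
      constructor
      · intro h j
        simp [hb₀, h j]
      · intro h j; rw [h j]; simp [hb₀]
    have hred : ∀ b : Fin n → Bool,
        (∑ a, (if ∀ j, (a j = (2:Fin 3) ↔ b j = true) then (1:ℂ) else 0) * ρ a a) *
          ((leakProjRank b : ℂ)⁻¹ * (if ∀ j, (x j = (2:Fin 3) ↔ b j = true) then (1:ℂ) else 0))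
        = if b = b₀ then
            (∑ a, (if ∀ j, (a j = (2:Fin 3) ↔ b j = true) then (1:ℂ) else 0) * ρ a a) *
              (leakProjRank b : ℂ)⁻¹ else 0 := by
      intro b
      rw [if_congr (hbiff b) rfl rfl]
      split_ifs <;> ring
    simp_rw [hred]
    rw [Finset.sum_ite_eq' Finset.univ b₀]
    simp only [Finset.mem_univ, if_pos]
    rw [Finset.sum_mul]
    apply Finset.sum_congr rfl
    intro a _
    rw [prod_g]
    have hcond : (∀ j, (a j = (2:Fin 3) ↔ b₀ j = true)) ↔ (∀ j, a j = (2:Fin 3) ↔ x j = 2) := by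
      simp [hb₀]
    have hcard : (Finset.univ.filter fun j => b₀ j = false).card
        = (Finset.univ.filter fun j => ¬ x j = (2:Fin 3)).card := by
      congr 1
      apply Finset.filter_congr
      intro j _
      simp [hb₀]
    rw [if_congr hcond rfl rfl, leakProjRank, hcard]
    push_cast
    split_ifs <;> ring
  · rw [if_neg hxy]
    simp [twirlProj, Matrix.sum_apply, leakProj, Matrix.diagonal_apply_ne _ hxy]

lemma prod_ite_zero' {n : ℕ} (p : Fin n → Prop) [DecidablePred p] (f : Fin n → ℂ) :
    (∏ k, if p k then f k else 0) = if ∀ k, p k then ∏ k, f k else 0 := by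
  split_ifs with h
  · exact Finset.prod_congr rfl fun k _ => if_pos (h k)
  · push_neg at h
    obtain ⟨k, hk⟩ := h
    exact Finset.prod_eq_zero (Finset.mem_univ k) (if_neg hk)

lemma swap4 {α β γ δ : Type*} [Fintype α] [Fintype β] [Fintype γ] [Fintype δ]
    (f : α → β → γ → δ → ℂ) :
    ∑ u : α, ∑ c : β, ∑ j : γ, ∑ a : δ, f u c j a
    = ∑ j : γ, ∑ a : δ, ∑ u : α, ∑ c : β, f u c j a :=
  calc ∑ u : α, ∑ c : β, ∑ j : γ, ∑ a : δ, f u c j a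
      = ∑ u : α, ∑ j : γ, ∑ c : β, ∑ a : δ, f u c j a :=
        Finset.sum_congr rfl fun u _ => Finset.sum_comm
    _ = ∑ j : γ, ∑ u : α, ∑ c : β, ∑ a : δ, f u c j a := Finset.sum_comm
    _ = ∑ j : γ, ∑ u : α, ∑ a : δ, ∑ c : β, f u c j a :=
        Finset.sum_congr rfl fun j _ => Finset.sum_congr rfl fun u _ => Finset.sum_comm
    _ = ∑ j : γ, ∑ a : δ, ∑ u : α, ∑ c : β, f u c j a :=
        Finset.sum_congr rfl fun j _ => Finset.sum_comm

lemma lhs_eq {n : ℕ} (ρ : Matrix (Fin n → Fin 3) (Fin n → Fin 3) ℂ)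
    (x y : Fin n → Fin 3) :
    (((1 : ℂ) / 16 ^ n) •
        ∑ u : Fin n → Fin 4, ∑ c : Fin n → Fin 4,
          pauliLeakKron u c * ρ * (pauliLeakKron u c)ᴴ) x y
    = if x = y then ∑ a, ρ a a * ∏ k, g (x k) (a k) else 0 := by
  simp only [Matrix.smul_apply, Matrix.sum_apply, Matrix.mul_apply,
    Matrix.conjTranspose_apply, pauliLeakKron, Matrix.of_apply, smul_eq_mul]
  simp_rw [Finset.sum_mul]
  rw [swap4]
  have key : ∀ j a : Fin n → Fin 3,
      (∑ u : Fin n → Fin 4, ∑ c : Fin n → Fin 4,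
        (∏ k, pauliLeak (u k) (c k) (x k) (a k)) * ρ a j *
          star (∏ k, pauliLeak (u k) (c k) (y k) (j k)))
      = ρ a j * ((16:ℂ)^n * if x = y ∧ a = j then ∏ k, g (x k) (a k) else 0) := by
    intro j a
    simp_rw [← starRingEnd_apply]
    have h1 : ∀ u c : Fin n → Fin 4,
        (∏ k, pauliLeak (u k) (c k) (x k) (a k)) * ρ a j *
          (starRingEnd ℂ) (∏ k, pauliLeak (u k) (c k) (y k) (j k))
        = ρ a j * ∏ k, (pauliLeak (u k) (c k) (x k) (a k) *
            (starRingEnd ℂ) (pauliLeak (u k) (c k) (y k) (j k))) := by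
      intro u c
      rw [map_prod, Finset.prod_mul_distrib]; ring
    simp_rw [h1, ← Finset.mul_sum]
    congr 1
    rw [sum_fun_prod (fun k u c => pauliLeak u c (x k) (a k) *
      (starRingEnd ℂ) (pauliLeak u c (y k) (j k)))]
    simp_rw [site]
    have h2 : ∀ k, (if x k = y k ∧ a k = j k then 16 * g (x k) (a k) else 0)
        = 16 * (if x k = y k ∧ a k = j k then g (x k) (a k) else 0) := by
      intro k; split_ifs <;> ring
    simp_rw [h2]
    rw [Finset.prod_mul_distrib, Finset.prod_const, prod_ite_zero']
    have h3 : (∀ k, x k = y k ∧ a k = j k) ↔ (x = y ∧ a = j) := by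
      rw [forall_and, funext_iff, funext_iff]
    rw [if_congr h3 rfl rfl, Finset.card_univ, Fintype.card_fin]
  simp_rw [key]
  by_cases hxy : x = y
  · subst hxy
    rw [if_pos rfl]
    have h4 : ∀ j a : Fin n → Fin 3,
        ρ a j * ((16:ℂ)^n * if x = x ∧ a = j then ∏ k, g (x k) (a k) else 0)
        = if a = j then (16:ℂ)^n * (ρ a j * ∏ k, g (x k) (a k)) else 0 := by
      intro j a
      by_cases h : a = j
      · rw [if_pos ⟨rfl, h⟩, if_pos h]; ring
      · rw [if_neg (fun hh => h hh.2), if_neg h]; ring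
    simp only [eq_self_iff_true, true_and]
    simp_rw [mul_ite, mul_zero]
    simp only [Finset.sum_ite_eq', Finset.mem_univ, if_true]
    have h6 : ∀ j : Fin n → Fin 3, ρ j j * ((16:ℂ)^n * ∏ k, g (x k) (j k))
        = (16:ℂ)^n * (ρ j j * ∏ k, g (x k) (j k)) := fun j => by ring
    simp_rw [h6, ← Finset.mul_sum]
    rw [← mul_assoc, one_div, inv_mul_cancel₀ (pow_ne_zero n (by norm_num)), one_mul]
  · rw [if_neg hxy]
    have h5 : ∀ j a : Fin n → Fin 3,
        ρ a j * ((16:ℂ)^n * if x = y ∧ a = j then ∏ k, g (x k) (a k) else 0) = 0 := by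
      intro j a; rw [if_neg (fun hh => hxy hh.1)]; ring
    simp_rw [h5, Finset.sum_const_zero, mul_zero]

/-- Multi-qubit Pauli twirl with leakage (Lemma 1). -/
theorem multi_qubit_pauli_twirl (n : ℕ) (hn : 1 ≤ n)
    (ρ : Matrix (Fin n → Fin 3) (Fin n → Fin 3) ℂ) :
    ((1 : ℂ) / 16 ^ n) •
        ∑ u : Fin n → Fin 4, ∑ c : Fin n → Fin 4,
          pauliLeakKron u c * ρ * (pauliLeakKron u c)ᴴ =
      twirlProj ρ := by
  ext x y
  rw [lhs_eq, rhs_eq]
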